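/- R is almost Gorenstein (i.e. mω = m) if and only if ωJ = J** for every non-principal fractional ideal J of R. -/

import Mathlib

open Submodule IsLocalRing

noncomputable section

/-- Length of an `R`-module, defined as the Krull dimension of its submodule lattice. -/
def modLength (R : Type*) [Ring R] (M : Type*) [AddCommGroup M] [Module R M] : WithBot ℕ∞ :=
  Order.krullDim (Submodule R M)

/-- Length of the quotient `I / J` for submodules `J ≤ I` of an ambient module. -/
def qlen (R : Type*) [CommRing R] {K : Type*} [AddCommGroup K] [Module R K]
    (I J : Submodule R K) : WithBot ℕ∞ :=
  modLength R (I ⧸ (J.comap I.subtype))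

/-- The image of an ideal of `R` in `K`, viewed as an `R`-submodule of `K`. -/
def idl (R : Type*) [CommRing R] (K : Type*) [CommRing K] [Algebra R K] (I : Ideal R) :
    Submodule R K :=
  Submodule.map (Algebra.linearMap R K) I

/-- The blowing-up `Λ(I) = ⋃ₙ (Iⁿ : Iⁿ)` of `R` along `I`, inside `K`. -/
def blowup (R : Type*) [CommRing R] (K : Type*) [CommRing K] [Algebra R K] (I : Ideal R) :
    Submodule R K :=
  ⨆ n : ℕ, (idl R K I ^ n) / (idl R K I ^ n)

/-- The set of values of the nonzero elements of a fractional ideal. -/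
def vvals {R : Type*} [CommRing R] {K : Type*} [CommRing K] [Algebra R K]
    (v : K → WithTop ℤ) (J : Submodule R K) : Set (WithTop ℤ) :=
  v '' {y | y ∈ J ∧ y ≠ 0}

section Aux

variable {R : Type*} [CommRing R] [IsDomain R] [IsLocalRing R] [IsNoetherianRing R]
variable {K : Type*} [Field K] [Algebra R K] [IsFractionRing R K]

lemma aux_fg_of_le {N P : Submodule R K} (hP : P.FG) (h : N ≤ P) : N.FG := by
  have : IsNoetherian R P := isNoetherian_of_fg_of_noetherian P hP
  have h2 : Submodule.map P.subtype (N.comap P.subtype) = N := by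
    rw [Submodule.map_comap_eq, Submodule.range_subtype, inf_eq_right]
    exact h
  exact h2 ▸ (IsNoetherian.noetherian _).map _

lemma aux_one_mem : (1 : K) ∈ (1 : Submodule R K) :=
  Submodule.mem_one.mpr ⟨1, map_one _⟩

lemma aux_idl_le_one (I : Ideal R) : idl R K I ≤ 1 := by
  rintro x hx
  obtain ⟨a, _, rfl⟩ := Submodule.mem_map.mp hx
  exact Submodule.mem_one.mpr ⟨a, rfl⟩

lemma aux_le_idl_max {N : Submodule R K} (h1 : N ≤ 1) (h2 : N ≠ 1) :
    N ≤ idl R K (maximalIdeal R) := by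
  intro x hx
  obtain ⟨a, rfl⟩ := Submodule.mem_one.mp (h1 hx)
  refine Submodule.mem_map.mpr ⟨a, ?_, rfl⟩
  by_contra ha
  have hu : IsUnit a := by
    by_contra h'
    exact ha (IsLocalRing.mem_maximalIdeal a |>.mpr h')
  refine h2 (le_antisymm h1 ?_)
  intro y hy
  obtain ⟨b, rfl⟩ := Submodule.mem_one.mp hy
  obtain ⟨u, rfl⟩ := hu
  have he : algebraMap R K b = (b * ↑u⁻¹) • algebraMap R K (↑u : R) := by
    rw [Algebra.smul_def, ← map_mul]
    congr 1
    rw [mul_assoc]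
    simp
  rw [he]
  exact Submodule.smul_mem _ _ hx

lemma aux_between {N : Submodule R K} (h1 : idl R K (maximalIdeal R) ≤ N) (h2 : N ≤ 1) :
    N = idl R K (maximalIdeal R) ∨ N = 1 := by
  by_cases h : N = 1
  · exact Or.inr h
  · exact Or.inl (le_antisymm (aux_le_idl_max h2 h) h1)

lemma aux_inv_principal {N N' : Submodule R K} (h : N * N' = 1) :
    ∃ z : K, N = span R {z} := by
  have hne : ¬ (∀ x ∈ N, ∀ y ∈ N', x * y ∈ idl R K (maximalIdeal R)) := by
    intro hall
    have hle : N * N' ≤ idl R K (maximalIdeal R) := Submodule.mul_le.mpr hall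
    rw [h] at hle
    obtain ⟨a, ha, ha1⟩ := Submodule.mem_map.mp (hle aux_one_mem)
    have ha' : a = 1 := IsFractionRing.injective R K (by simpa using ha1)
    exact (IsLocalRing.maximalIdeal.isMaximal R).ne_top
      (Ideal.eq_top_of_isUnit_mem _ ha (ha' ▸ isUnit_one))
  push_neg at hne
  obtain ⟨x, hx, y, hy, hxy⟩ := hne
  obtain ⟨u, hu⟩ := Submodule.mem_one.mp (h ▸ Submodule.mul_mem_mul hx hy)
  have hum : u ∉ maximalIdeal R := fun hm => hxy (Submodule.mem_map.mpr ⟨u, hm, hu⟩)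
  have huu : IsUnit u := by
    by_contra h'
    exact hum (IsLocalRing.mem_maximalIdeal u |>.mpr h')
  obtain ⟨v, rfl⟩ := huu
  refine ⟨x, le_antisymm ?_ (Submodule.span_le.mpr (Set.singleton_subset_iff.mpr hx))⟩
  intro z hz
  obtain ⟨b, hb⟩ := Submodule.mem_one.mp (h ▸ Submodule.mul_mem_mul hz hy)
  have he : z = ((↑v⁻¹ : R) * b) • x := by
    rw [Algebra.smul_def, map_mul, hb]
    have h1 : algebraMap R K ↑v⁻¹ * (z * y) * x = algebraMap R K ↑v⁻¹ * algebraMap R K ↑v * z := by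
      rw [hu]; ring
    rw [h1, ← map_mul]
    simp
  rw [he]
  exact Submodule.smul_mem _ _ (Submodule.mem_span_singleton_self x)

lemma aux_max_principal_false (hp : (maximalIdeal R).IsPrincipal)
    (ω : Submodule R K) (hω1 : 1 ≤ ω) (hω2 : ω < (Subalgebra.toSubmodule (integralClosure R K))) :
    False := by
  have hPIR : IsPrincipalIdealRing R :=
    ((tfae_of_isNoetherianRing_of_isLocalRing_of_isDomain R).out 4 0).mp hp
  have hic : IsIntegrallyClosed R := inferInstance
  have hb : integralClosure R K = ⊥ := IsIntegrallyClosed.integralClosure_eq_bot R K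
  rw [hb] at hω2
  have hbot : (Subalgebra.toSubmodule (⊥ : Subalgebra R K)) = 1 := by
    ext x
    simp [Algebra.mem_bot, Submodule.mem_one, Set.mem_range]
  rw [hbot] at hω2
  exact absurd hω1 hω2.2

lemma aux_div_key (ω J : Submodule R K) (hωω : ω / ω = 1) : ω / (ω * J) = 1 / J := by
  ext x
  rw [← Submodule.span_singleton_le_iff_mem, ← Submodule.span_singleton_le_iff_mem,
    Submodule.le_div_iff_mul_le, ← hωω, Submodule.le_div_iff_mul_le,
    Submodule.le_div_iff_mul_le]
  have e : span R {x} * (ω * J) = span R {x} * J * ω := by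
    rw [mul_comm ω J, ← mul_assoc]
  rw [e]

end Aux

theorem stmt_14
    (R : Type*) [CommRing R] [IsDomain R] [IsLocalRing R] [IsNoetherianRing R]
    (K : Type*) [Field K] [Algebra R K] [IsFractionRing R K]
    [IsDiscreteValuationRing (integralClosure R K)]
    [Module.Finite R (integralClosure R K)]
    (hres : ∀ y : integralClosure R K, ∃ a : R,
      y - algebraMap R (integralClosure R K) a ∈ maximalIdeal (integralClosure R K))
    (hkinf : Infinite (ResidueField R))
    (ω : Submodule R K) (hω1 : 1 ≤ ω) (hω2 : ω < ((integralClosure R K).toSubmodule))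
    (hωω : ω / ω = 1)
    (hωdual : ∀ J : Submodule R K, J ≠ ⊥ → J.FG → ω / (ω / J) = J) :
    idl R K (maximalIdeal R) * ω = idl R K (maximalIdeal R) ↔
      ∀ J : Submodule R K, J ≠ ⊥ → J.FG → (¬ ∃ z : K, J = span R {z}) →
        ω * J = (1 : Submodule R K) / ((1 : Submodule R K) / J) := by
  have hTfg : (Subalgebra.toSubmodule (integralClosure R K)).FG :=
    (Submodule.fg_top _).mp (Module.finite_def.mp ‹Module.Finite R (integralClosure R K)›)
  have hωfg : ω.FG := aux_fg_of_le hTfg hω2.le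
  constructor
  · intro hm J hJ0 hJfg hJp
    have hJdiv : J * ((1 : Submodule R K) / J) ≤ 1 := by
      rw [mul_comm]
      exact Submodule.le_div_iff_mul_le.mp le_rfl
    have hTne : J * ((1 : Submodule R K) / J) ≠ 1 := fun hEq => hJp (aux_inv_principal hEq)
    have hTm : J * ((1 : Submodule R K) / J) ≤ idl R K (maximalIdeal R) :=
      aux_le_idl_max hJdiv hTne
    have le1 : ω * J ≤ (1 : Submodule R K) / ((1 : Submodule R K) / J) := by
      rw [Submodule.le_div_iff_mul_le, mul_assoc]
      calc ω * (J * ((1 : Submodule R K) / J)) ≤ ω * idl R K (maximalIdeal R) :=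
            mul_le_mul_right hTm _
        _ = idl R K (maximalIdeal R) * ω := mul_comm _ _
        _ = idl R K (maximalIdeal R) := hm
        _ ≤ 1 := aux_idl_le_one _
    have hωJ0 : ω * J ≠ ⊥ := by
      obtain ⟨y, hy, hy0⟩ := Submodule.exists_mem_ne_zero_of_ne_bot hJ0
      intro hbot
      have hmem : (1 : K) * y ∈ ω * J := Submodule.mul_mem_mul (hω1 aux_one_mem) hy
      rw [hbot, one_mul] at hmem
      exact hy0 (by simpa using hmem)
    have le2 : (1 : Submodule R K) / ((1 : Submodule R K) / J) ≤ ω * J := by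
      have h2 : ω / ((1 : Submodule R K) / J) = ω * J := by
        rw [← aux_div_key ω J hωω, hωdual _ hωJ0 (hωfg.mul hJfg)]
      rw [← h2, Submodule.le_div_iff_mul_le]
      calc (1 : Submodule R K) / ((1 : Submodule R K) / J) * ((1 : Submodule R K) / J) ≤ 1 :=
            Submodule.le_div_iff_mul_le.mp le_rfl
        _ ≤ ω := hω1
    exact le_antisymm le1 le2
  · intro h
    have hm0 : maximalIdeal R ≠ ⊥ := by
      intro hbot
      exact aux_max_principal_false (hbot ▸ bot_isPrincipal) ω hω1 hω2
    obtain ⟨t0, ht0, ht0'⟩ := Submodule.exists_mem_ne_zero_of_ne_bot hm0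
    have hJ0 : idl R K (maximalIdeal R) ≠ ⊥ := by
      intro hb
      have hmem : algebraMap R K t0 ∈ idl R K (maximalIdeal R) :=
        Submodule.mem_map.mpr ⟨t0, ht0, rfl⟩
      rw [hb, Submodule.mem_bot] at hmem
      exact ht0' (IsFractionRing.injective R K (by simpa using hmem))
    have hJfg : (idl R K (maximalIdeal R)).FG := (IsNoetherian.noetherian _).map _
    have hJp : ¬ ∃ z : K, idl R K (maximalIdeal R) = span R {z} := by
      rintro ⟨z, hz⟩
      have hzmem : z ∈ idl R K (maximalIdeal R) := hz ▸ Submodule.mem_span_singleton_self z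
      obtain ⟨t, htm, rfl⟩ := Submodule.mem_map.mp hzmem
      refine aux_max_principal_false ?_ ω hω1 hω2
      refine ⟨⟨t, le_antisymm ?_ ?_⟩⟩
      · intro a ha
        have hmem : algebraMap R K a ∈ span R {(Algebra.linearMap R K) t} :=
          hz ▸ Submodule.mem_map.mpr ⟨a, ha, rfl⟩
        obtain ⟨c, hc⟩ := Submodule.mem_span_singleton.mp hmem
        refine Submodule.mem_span_singleton.mpr ⟨c, ?_⟩
        apply IsFractionRing.injective R K
        rw [Algebra.smul_def] at hc
        simpa [Algebra.smul_def] using hc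
      · rw [Submodule.span_le, Set.singleton_subset_iff]
        exact htm
    have h' := h _ hJ0 hJfg hJp
    have h1 : idl R K (maximalIdeal R) ≤ ω * idl R K (maximalIdeal R) := by
      conv_lhs => rw [← one_mul (idl R K (maximalIdeal R))]
      exact mul_le_mul_left hω1 _
    have h2 : ω * idl R K (maximalIdeal R) ≤ 1 := by
      rw [h']
      intro x hx
      have h1J : (1 : K) ∈ (1 : Submodule R K) / idl R K (maximalIdeal R) :=
        Submodule.mem_div_iff_forall_mul_mem.mpr fun y hy => by
          simpa using aux_idl_le_one _ hy
      simpa using Submodule.mem_div_iff_forall_mul_mem.mp hx 1 h1J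
    rcases aux_between h1 h2 with he | he
    · rw [mul_comm]
      exact he
    · exact absurd (aux_inv_principal (by rwa [mul_comm ω _] at he)) hJp

end
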